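/- Let G be a topological group, d a continuous left-invariant pseudometric on G, and S ⊆ G a symmetric open identity neighborhood generating G with finite d-diameter, say d(1, s) ≤ M for all s ∈ S, and suppose ε > 0 satisfies {g ∈ G : d(1, g) < 2ε} ⊆ S. Define \widehat{d}_S(g, h) = inf{d(x₀, x₁) + ⋯ + d(x_{n-1}, x_n) : x₀ = g, x_n = h, and x_{i-1}⁻¹x_i ∈ S for all i}. Then: (i) \widehat{d}_S is a continuous left-invariant pseudometric on G; (ii) \widehat{d}_S(g, h) ≤ M · d_S(g, h) for all g, h; and (iii) d_S(g, h) ≤ (2/ε)·\widehat{d}_S(g, h) + (2/ε) + 1 for all g, h, where d_S is the word metric with respect to S. In particular \widehat{d}_S and d_S are quasi-isometric. -/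

import Mathlib

open Pointwise

/-- A continuous, left-invariant pseudometric on a topological group `G`. -/
structure IsContLeftInvPseudometric (G : Type*) [Group G] [TopologicalSpace G]
    (d : G → G → ℝ) : Prop where
  continuous : Continuous fun p : G × G => d p.1 p.2
  self : ∀ x : G, d x x = 0
  symm : ∀ x y : G, d x y = d y x
  nonneg : ∀ x y : G, 0 ≤ d x y
  triangle : ∀ x y z : G, d x z ≤ d x y + d y z
  left_inv : ∀ g x y : G, d (g * x) (g * y) = d x y

/-- A subset `A` of a topological group `G` is coarsely bounded in `G` if it has
finite diameter with respect to every continuous left-invariant pseudometric on `G`. -/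
def IsCoarselyBounded (G : Type*) [Group G] [TopologicalSpace G] (A : Set G) : Prop :=
  ∀ d : G → G → ℝ, IsContLeftInvPseudometric G d →
    ∃ M : ℝ, ∀ a ∈ A, ∀ b ∈ A, d a b ≤ M

/-- The word length of `g` with respect to a generating set `S`: the least `n` such
that `g` is a product of `n` elements of `S`. -/
noncomputable def wordLength {G : Type*} [Group G] (S : Set G) (g : G) : ℕ :=
  sInf {n : ℕ | ∃ l : List G, l.length = n ∧ (∀ s ∈ l, s ∈ S) ∧ l.prod = g}

/-- `G` admits a geometry if there is a continuous left-invariant pseudometric on `G`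
which dominates, in the coarse Lipschitz sense, every continuous left-invariant
pseudometric on `G`. -/
def AdmitsAGeometry (G : Type*) [Group G] [TopologicalSpace G] : Prop :=
  ∃ d : G → G → ℝ, IsContLeftInvPseudometric G d ∧
    ∀ d' : G → G → ℝ, IsContLeftInvPseudometric G d' →
      ∃ L K : ℝ, 0 < L ∧ 0 ≤ K ∧ ∀ g h : G, d' g h ≤ L * d g h + K

section RosendalAux

variable {G : Type*} [Group G]

lemma exists_word (S : Set G) (hsymm : S⁻¹ = S) (hgen : Subgroup.closure S = ⊤) (g : G) :
    ∃ l : List G, (∀ s ∈ l, s ∈ S) ∧ l.prod = g := by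
  have hg : g ∈ Submonoid.closure (S ∪ S⁻¹) := by
    rw [← Subgroup.closure_toSubmonoid, hgen]; trivial
  rw [hsymm, Set.union_self] at hg
  obtain ⟨l, h1, h2⟩ := Submonoid.exists_list_of_mem_closure hg
  exact ⟨l, h1, h2⟩

lemma wordLength_le (S : Set G) (l : List G) (hl : ∀ s ∈ l, s ∈ S) :
    wordLength S l.prod ≤ l.length := Nat.sInf_le ⟨l, rfl, hl, rfl⟩

lemma exists_min_word (S : Set G) (hsymm : S⁻¹ = S) (hgen : Subgroup.closure S = ⊤) (g : G) :
    ∃ l : List G, l.length = wordLength S g ∧ (∀ s ∈ l, s ∈ S) ∧ l.prod = g := by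
  have hne : {n : ℕ | ∃ l : List G, l.length = n ∧ (∀ s ∈ l, s ∈ S) ∧ l.prod = g}.Nonempty := by
    obtain ⟨l, h1, h2⟩ := exists_word S hsymm hgen g
    exact ⟨l.length, l, rfl, h1, h2⟩
  exact Nat.sInf_mem hne

lemma wordLength_one_le (S : Set G) : wordLength S 1 = 0 := by
  have := wordLength_le S [] (by simp)
  simpa using this

lemma wordLength_mul_le (S : Set G) (hsymm : S⁻¹ = S) (hgen : Subgroup.closure S = ⊤)
    (a b : G) : wordLength S (a * b) ≤ wordLength S a + wordLength S b := by
  obtain ⟨la, hla, hlaS, hlap⟩ := exists_min_word S hsymm hgen a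
  obtain ⟨lb, hlb, hlbS, hlbp⟩ := exists_min_word S hsymm hgen b
  have h := wordLength_le S (la ++ lb) (by
    intro s hs; rcases List.mem_append.mp hs with h | h
    exacts [hlaS s h, hlbS s h])
  rw [List.prod_append, hlap, hlbp, List.length_append, hla, hlb] at h
  exact h

lemma wordLength_mem_le_one (S : Set G) {s : G} (hs : s ∈ S) : wordLength S s ≤ 1 := by
  have := wordLength_le S [s] (by simpa)
  simpa using this

lemma chain_bound
    (d : G → G → ℝ) (hnn : ∀ x y : G, 0 ≤ d x y)
    (hself : ∀ x : G, d x x = 0)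
    (htri : ∀ x y z : G, d x z ≤ d x y + d y z)
    (hli : ∀ g x y : G, d (g * x) (g * y) = d x y)
    (S : Set G) (hsymm : S⁻¹ = S) (h1S : (1 : G) ∈ S)
    (hgen : Subgroup.closure S = ⊤)
    (ε : ℝ) (hε : 0 < ε) (hball : {g : G | d 1 g < 2 * ε} ⊆ S) :
    ∀ (n : ℕ) (x : ℕ → G), (∀ i < n, (x i)⁻¹ * x (i + 1) ∈ S) →
      ε * (wordLength S ((x 0)⁻¹ * x n) : ℝ) ≤
        (∑ i ∈ Finset.range n, d (x i) (x (i + 1))) + ε := by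
  intro n
  induction n using Nat.strong_induction_on with
  | _ n ih =>
  intro x hx
  rcases Nat.eq_zero_or_pos n with rfl | hn
  · simp [wordLength_one_le, hε.le]
  set s : ℕ → ℝ := fun j => ∑ i ∈ Finset.range j, d (x i) (x (i + 1)) with hs
  have hs_mono : ∀ a b : ℕ, a ≤ b → s a ≤ s b := by
    intro a b hab
    exact Finset.sum_le_sum_of_subset_of_nonneg (Finset.range_subset_range.2 hab)
      (fun i _ _ => hnn _ _)
  have hs_nonneg : ∀ j : ℕ, 0 ≤ s j := fun j => by
    simpa [hs] using hs_mono 0 j (Nat.zero_le j)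
  have hd0 : ∀ j : ℕ, d (x 0) (x j) ≤ s j := by
    intro j
    induction j with
    | zero => simp [hs, hself]
    | succ j ihj =>
        calc d (x 0) (x (j+1)) ≤ d (x 0) (x j) + d (x j) (x (j+1)) := htri _ _ _
        _ ≤ s j + d (x j) (x (j+1)) := by linarith
        _ = s (j+1) := (Finset.sum_range_succ _ _).symm
  have hmem : ∀ j : ℕ, d (x 0) (x j) < 2 * ε → (x 0)⁻¹ * x j ∈ S := by
    intro j hj
    apply hball
    have h := hli (x 0) 1 ((x 0)⁻¹ * x j)
    simp only [mul_one, mul_inv_cancel_left] at h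
    show d 1 ((x 0)⁻¹ * x j) < 2 * ε
    rw [← h]; exact hj
  classical
  set P : ℕ → Prop := fun j => s j < 2 * ε with hP
  have hP0 : P 0 := by simp [hP, hs]; positivity
  set j0 : ℕ := Nat.findGreatest P n with hj0
  have hj_le : j0 ≤ n := Nat.findGreatest_le n
  have hPj : P j0 := Nat.findGreatest_spec (Nat.zero_le n) hP0
  rcases eq_or_lt_of_le hj_le with hj_eq | hj_lt
  · -- whole chain is one S-step
    have hsn : s n < 2 * ε := hj_eq ▸ hPj
    have hSmem : (x 0)⁻¹ * x n ∈ S := hmem n (lt_of_le_of_lt (hd0 n) hsn)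
    have hW : (wordLength S ((x 0)⁻¹ * x n) : ℝ) ≤ 1 := by
      exact_mod_cast wordLength_mem_le_one S hSmem
    nlinarith [hs_nonneg n, hε]
  · -- peel two steps
    have h2e : 2 * ε ≤ s (j0 + 1) := by
      have := Nat.findGreatest_is_greatest (lt_add_one j0) (by omega : j0 + 1 ≤ n)
      simpa [hP, not_lt] using this
    have h1 : (x 0)⁻¹ * x j0 ∈ S := hmem j0 (lt_of_le_of_lt (hd0 j0) hPj)
    have h2 : (x j0)⁻¹ * x (j0 + 1) ∈ S := hx j0 hj_lt
    -- shifted chain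
    set k := j0 + 1 with hk
    have hkn : k ≤ n := hj_lt
    set y : ℕ → G := fun i => x (k + i) with hy
    have hychain : ∀ i < n - k, (y i)⁻¹ * y (i + 1) ∈ S := by
      intro i hi
      exact hx (k + i) (by omega)
    have hIH := ih (n - k) (by omega) y hychain
    have hysum : ∑ i ∈ Finset.range (n - k), d (y i) (y (i + 1)) = s n - s k := by
      have hsplit := Finset.sum_Ico_consecutive (fun i => d (x i) (x (i + 1)))
        (Nat.zero_le k) hkn
      have hico : ∑ i ∈ Finset.Ico k n, d (x i) (x (i + 1))
          = ∑ i ∈ Finset.range (n - k), d (y i) (y (i + 1)) := by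
        rw [Finset.sum_Ico_eq_sum_range]
        rfl
      rw [← hico]
      have hsk : s k + ∑ i ∈ Finset.Ico k n, d (x i) (x (i + 1)) = s n := by
        show (∑ i ∈ Finset.range k, d (x i) (x (i + 1))) + _
            = ∑ i ∈ Finset.range n, d (x i) (x (i + 1))
        rw [Finset.range_eq_Ico, Finset.range_eq_Ico]
        exact hsplit
      linarith
    have hy0 : y 0 = x k := by show x (k + 0) = x k; rw [Nat.add_zero]
    have hyn : y (n - k) = x n := by show x (k + (n - k)) = x n; rw [Nat.add_sub_cancel' hkn]
    rw [hy0, hyn, hysum] at hIH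
    -- word length split
    have hW : wordLength S ((x 0)⁻¹ * x n) ≤ 1 + 1 + wordLength S ((x k)⁻¹ * x n) := by
      have e1 : (x 0)⁻¹ * x n = ((x 0)⁻¹ * x k) * ((x k)⁻¹ * x n) := by group
      have e2 : (x 0)⁻¹ * x k = ((x 0)⁻¹ * x j0) * ((x j0)⁻¹ * x k) := by group
      calc wordLength S ((x 0)⁻¹ * x n)
          ≤ wordLength S ((x 0)⁻¹ * x k) + wordLength S ((x k)⁻¹ * x n) := by
            rw [e1]; exact wordLength_mul_le S hsymm hgen _ _
        _ ≤ (wordLength S ((x 0)⁻¹ * x j0) + wordLength S ((x j0)⁻¹ * x k))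
              + wordLength S ((x k)⁻¹ * x n) := by
            gcongr
            rw [e2]; exact wordLength_mul_le S hsymm hgen _ _
        _ ≤ 1 + 1 + wordLength S ((x k)⁻¹ * x n) := by
            gcongr
            exacts [wordLength_mem_le_one S h1, wordLength_mem_le_one S h2]
    have hWr : (wordLength S ((x 0)⁻¹ * x n) : ℝ)
        ≤ 2 + (wordLength S ((x k)⁻¹ * x n) : ℝ) := by exact_mod_cast hW
    have : ε * (wordLength S ((x 0)⁻¹ * x n) : ℝ)
        ≤ ε * (2 + (wordLength S ((x k)⁻¹ * x n) : ℝ)) := by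
      exact mul_le_mul_of_nonneg_left hWr hε.le
    nlinarith [hIH, h2e]


end RosendalAux

/-- Rosendal's Lemma 2.70: given a continuous left-invariant pseudometric `d` and a
symmetric open identity neighborhood `S` generating `G` with `d`-diameter at most `M`,
and `ε > 0` with the `2ε`-ball contained in `S`, the infimal-chain pseudometric
`dhat` is a continuous left-invariant pseudometric quasi-isometric to the word
metric `d_S`. -/
theorem rosendal_hat_pseudometric {G : Type*} [Group G] [TopologicalSpace G]
    [IsTopologicalGroup G]
    (d : G → G → ℝ) (hd : IsContLeftInvPseudometric G d)
    (S : Set G) (hsymm : S⁻¹ = S) (hSopen : IsOpen S) (h1S : (1 : G) ∈ S)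
    (hgen : Subgroup.closure S = ⊤)
    (M : ℝ) (hM : ∀ s ∈ S, d 1 s ≤ M)
    (ε : ℝ) (hε : 0 < ε) (hball : {g : G | d 1 g < 2 * ε} ⊆ S)
    (dhat : G → G → ℝ)
    (hdhat : ∀ g h : G, dhat g h = sInf {r : ℝ |
      ∃ (n : ℕ) (x : ℕ → G), x 0 = g ∧ x n = h ∧
        (∀ i < n, (x i)⁻¹ * x (i + 1) ∈ S) ∧
        r = ∑ i ∈ Finset.range n, d (x i) (x (i + 1))}) :
    IsContLeftInvPseudometric G dhat ∧
      (∀ g h : G, dhat g h ≤ M * (wordLength S (g⁻¹ * h) : ℝ)) ∧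
      (∀ g h : G, (wordLength S (g⁻¹ * h) : ℝ) ≤ (2 / ε) * dhat g h + 2 / ε + 1) := by
  obtain ⟨hd_cont, hd_self, hd_symm, hd_nonneg, hd_tri, hd_li⟩ := hd
  classical
  have mem_le : ∀ (g h : G) (n : ℕ) (x : ℕ → G), x 0 = g → x n = h →
      (∀ i < n, (x i)⁻¹ * x (i + 1) ∈ S) →
      dhat g h ≤ ∑ i ∈ Finset.range n, d (x i) (x (i + 1)) := by
    intro g h n x h0 hn hxS
    rw [hdhat]
    apply csInf_le
    · refine ⟨0, ?_⟩
      rintro r ⟨m, y, -, -, -, rfl⟩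
      exact Finset.sum_nonneg fun i _ => hd_nonneg _ _
    · exact ⟨n, x, h0, hn, hxS, rfl⟩
  have ge_forall : ∀ (g h : G) (c : ℝ),
      (∀ (n : ℕ) (x : ℕ → G), x 0 = g → x n = h →
        (∀ i < n, (x i)⁻¹ * x (i + 1) ∈ S) →
        c ≤ ∑ i ∈ Finset.range n, d (x i) (x (i + 1))) → c ≤ dhat g h := by
    intro g h c hc
    rw [hdhat]
    apply le_csInf
    · obtain ⟨l, hlS, hlp⟩ := exists_word S hsymm hgen (g⁻¹ * h)
      refine ⟨∑ i ∈ Finset.range l.length,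
          d (g * (l.take i).prod) (g * (l.take (i + 1)).prod),
        l.length, fun i => g * (l.take i).prod, by simp, by simp [hlp], ?_, rfl⟩
      intro i hi
      show (g * (l.take i).prod)⁻¹ * (g * (l.take (i + 1)).prod) ∈ S
      rw [List.prod_take_succ l i hi]
      have e : (g * (l.take i).prod)⁻¹ * (g * ((l.take i).prod * l[i])) = l[i] := by group
      rw [e]
      exact hlS _ (List.getElem_mem hi)
    · rintro r ⟨n, x, h0, hn, hxS, rfl⟩
      exact hc n x h0 hn hxS
  have hnonneg : ∀ g h : G, 0 ≤ dhat g h := fun g h =>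
    ge_forall g h 0 fun n x _ _ _ => Finset.sum_nonneg fun i _ => hd_nonneg _ _
  have hself : ∀ g : G, dhat g g = 0 := by
    intro g
    refine le_antisymm ?_ (hnonneg g g)
    have := mem_le g g 0 (fun _ => g) rfl rfl (by omega)
    simpa using this
  have hsymm' : ∀ g h : G, dhat g h ≤ dhat h g := by
    intro g h
    apply ge_forall h g (dhat g h)
    intro n x h0 hn hxS
    have hmem : ∀ i < n, ((fun i => x (n - i)) i)⁻¹ * (fun i => x (n - i)) (i + 1) ∈ S := by
      intro i hi
      show (x (n - i))⁻¹ * x (n - (i + 1)) ∈ S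
      have e1 : n - i = (n - (i + 1)) + 1 := by omega
      rw [e1]
      have ha := hxS (n - (i + 1)) (by omega)
      have hb : (x (n - (i + 1) + 1))⁻¹ * x (n - (i + 1))
          = ((x (n - (i + 1)))⁻¹ * x (n - (i + 1) + 1))⁻¹ := by group
      rw [hb, ← hsymm]
      exact Set.inv_mem_inv.mpr ha
    have hle := mem_le g h n (fun i => x (n - i))
      (by simp [hn]) (by simp [h0]) hmem
    refine hle.trans_eq ?_
    calc ∑ i ∈ Finset.range n, d (x (n - i)) (x (n - (i + 1)))
        = ∑ i ∈ Finset.range n, d (x (n - 1 - i)) (x ((n - 1 - i) + 1)) := by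
          apply Finset.sum_congr rfl
          intro i hi
          have hi' := Finset.mem_range.mp hi
          have e1 : n - i = (n - 1 - i) + 1 := by omega
          have e2 : n - (i + 1) = n - 1 - i := by omega
          rw [e1, e2, hd_symm]
      _ = ∑ i ∈ Finset.range n, d (x i) (x (i + 1)) :=
          Finset.sum_range_reflect (fun j => d (x j) (x (j + 1))) n
  have htri : ∀ g h k : G, dhat g k ≤ dhat g h + dhat h k := by
    intro g h k
    have key : ∀ (n : ℕ) (x : ℕ → G), x 0 = g → x n = h →
        (∀ i < n, (x i)⁻¹ * x (i + 1) ∈ S) →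
        dhat g k - (∑ i ∈ Finset.range n, d (x i) (x (i + 1))) ≤ dhat h k := by
      intro n x h0 hn hxS
      apply ge_forall h k
      intro m y h0' hm' hyS
      set z : ℕ → G := fun i => if i < n then x i else y (i - n) with hz
      have hzy : ∀ i : ℕ, z (n + i) = y i := by
        intro i
        show (if n + i < n then x (n + i) else y (n + i - n)) = y i
        rw [if_neg (by omega)]
        congr 1
        omega
      have hz_eq : ∀ i ≤ n, z i = x i := by
        intro i hi
        rcases lt_or_eq_of_le hi with h1 | h1
        · exact if_pos h1
        · subst h1
          have : z i = y 0 := by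
            have := hzy 0
            rwa [Nat.add_zero] at this
          rw [this, h0', hn]
      have hz0 : z 0 = g := by rw [hz_eq 0 (Nat.zero_le n), h0]
      have hzn : z (n + m) = k := by rw [hzy m, hm']
      have hzS : ∀ i < n + m, (z i)⁻¹ * z (i + 1) ∈ S := by
        intro i hi
        rcases lt_or_ge i n with h1 | h1
        · rw [hz_eq i h1.le, hz_eq (i + 1) h1]
          exact hxS i h1
        · have e1 : z i = y (i - n) := by
            have := hzy (i - n)
            rwa [Nat.add_sub_cancel' h1] at this
          have e2 : z (i + 1) = y (i - n + 1) := by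
            have := hzy (i - n + 1)
            have e : n + (i - n + 1) = i + 1 := by omega
            rwa [e] at this
          rw [e1, e2]
          exact hyS (i - n) (by omega)
      have hzsum : ∑ i ∈ Finset.range (n + m), d (z i) (z (i + 1))
          = (∑ i ∈ Finset.range n, d (x i) (x (i + 1)))
            + ∑ i ∈ Finset.range m, d (y i) (y (i + 1)) := by
        rw [Finset.sum_range_add]
        congr 1
        · apply Finset.sum_congr rfl
          intro i hi
          have hi' := Finset.mem_range.mp hi
          rw [hz_eq i hi'.le, hz_eq (i + 1) hi']
        · apply Finset.sum_congr rfl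
          intro i hi
          have e2 : z (n + i + 1) = y (i + 1) := by
            have := hzy (i + 1)
            have e : n + (i + 1) = n + i + 1 := by omega
            rwa [e] at this
          rw [hzy i, e2]
      have hconc := (mem_le g k (n + m) z hz0 hzn hzS).trans_eq hzsum
      linarith
    have h2 : dhat g k - dhat h k ≤ dhat g h := by
      apply ge_forall g h
      intro n x h0 hn hxS
      linarith [key n x h0 hn hxS]
    linarith
  have hli : ∀ g a b : G, dhat (g * a) (g * b) = dhat a b := by
    have htrans : ∀ g a b : G, dhat (g * a) (g * b) ≤ dhat a b := by
      intro g a b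
      apply ge_forall a b
      intro n x h0 hn hxS
      have hstep : ∀ i < n, ((fun i => g * x i) i)⁻¹ * (fun i => g * x i) (i + 1) ∈ S := by
        intro i hi
        have e : (g * x i)⁻¹ * (g * x (i + 1)) = (x i)⁻¹ * x (i + 1) := by group
        show (g * x i)⁻¹ * (g * x (i + 1)) ∈ S
        rw [e]
        exact hxS i hi
      have := mem_le (g * a) (g * b) n (fun i => g * x i)
        (by show g * x 0 = g * a; rw [h0]) (by show g * x n = g * b; rw [hn]) hstep
      refine this.trans_eq ?_
      exact Finset.sum_congr rfl fun i _ => hd_li g _ _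
    intro g a b
    refine le_antisymm (htrans g a b) ?_
    have := htrans g⁻¹ (g * a) (g * b)
    simpa [inv_mul_cancel_left] using this
  have hone : ∀ g h : G, g⁻¹ * h ∈ S → dhat g h ≤ d g h := by
    intro g h hS
    have := mem_le g h 1 (fun i => if i = 0 then g else h) (by simp) (by simp) (by
      intro i hi
      have : i = 0 := by omega
      subst this
      simpa using hS)
    simpa using this
  have hcont : Continuous fun p : G × G => dhat p.1 p.2 := by
    rw [continuous_iff_continuousAt]
    rintro ⟨a, b⟩
    rw [ContinuousAt, Metric.tendsto_nhds]
    intro δ hδ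
    have hU : ∀ c : G, {g : G | c⁻¹ * g ∈ S ∧ d c g < δ / 2} ∈ nhds c := by
      intro c
      apply IsOpen.mem_nhds
      · have o1 : IsOpen {g : G | c⁻¹ * g ∈ S} :=
          hSopen.preimage (continuous_const.mul continuous_id)
        have o2 : IsOpen {g : G | d c g < δ / 2} := by
          have hc : Continuous fun g : G => d c g :=
            hd_cont.comp (Continuous.prodMk_right c)
          exact isOpen_lt hc continuous_const
        exact o1.inter o2
      · refine ⟨by simpa using h1S, ?_⟩
        rw [hd_self]
        linarith
    filter_upwards [prod_mem_nhds (hU a) (hU b)] with p hp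
    obtain ⟨⟨ha1, ha2⟩, hb1, hb2⟩ := hp
    have hga : (p.1)⁻¹ * a ∈ S := by
      rw [← hsymm, Set.mem_inv]
      simpa using ha1
    have hhb : (p.2)⁻¹ * b ∈ S := by
      rw [← hsymm, Set.mem_inv]
      simpa using hb1
    have b1 : dhat p.1 a ≤ d p.1 a := hone p.1 a hga
    have b2 : dhat a p.1 ≤ d a p.1 := hone a p.1 ha1
    have b3 : dhat b p.2 ≤ d b p.2 := hone b p.2 hb1
    have b4 : dhat p.2 b ≤ d p.2 b := hone p.2 b hhb
    have f1 : dhat p.1 p.2 ≤ dhat p.1 a + dhat a b + dhat b p.2 := by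
      linarith [htri p.1 a p.2, htri a b p.2]
    have f2 : dhat a b ≤ dhat a p.1 + dhat p.1 p.2 + dhat p.2 b := by
      linarith [htri a p.1 b, htri p.1 p.2 b]
    have e1 : d p.1 a = d a p.1 := hd_symm _ _
    have e2 : d p.2 b = d b p.2 := hd_symm _ _
    rw [Real.dist_eq, abs_sub_lt_iff]
    constructor <;> linarith
  have part2 : ∀ g h : G, dhat g h ≤ M * (wordLength S (g⁻¹ * h) : ℝ) := by
    intro g h
    obtain ⟨l, hlen, hlS, hlp⟩ := exists_min_word S hsymm hgen (g⁻¹ * h)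
    have hstep : ∀ i < l.length,
        ((fun i => g * (l.take i).prod) i)⁻¹ * (fun i => g * (l.take i).prod) (i + 1) ∈ S := by
      intro i hi
      show (g * (l.take i).prod)⁻¹ * (g * (l.take (i + 1)).prod) ∈ S
      rw [List.prod_take_succ l i hi]
      have e : (g * (l.take i).prod)⁻¹ * (g * ((l.take i).prod * l[i])) = l[i] := by group
      rw [e]
      exact hlS _ (List.getElem_mem hi)
    have hchain := mem_le g h l.length (fun i => g * (l.take i).prod)
      (by simp) (by simp [hlp]) hstep
    refine hchain.trans ?_
    have hbound : ∀ i ∈ Finset.range l.length,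
        d (g * (l.take i).prod) (g * (l.take (i + 1)).prod) ≤ M := by
      intro i hi
      have hi' := Finset.mem_range.mp hi
      rw [List.prod_take_succ l i hi', ← mul_assoc]
      have e := hd_li (g * (l.take i).prod) 1 l[i]
      rw [mul_one] at e
      rw [e]
      exact hM _ (hlS _ (List.getElem_mem hi'))
    calc ∑ i ∈ Finset.range l.length,
          d (g * (l.take i).prod) (g * (l.take (i + 1)).prod)
        ≤ ∑ _i ∈ Finset.range l.length, M := Finset.sum_le_sum hbound
      _ = (l.length : ℝ) * M := by
          rw [Finset.sum_const, Finset.card_range, nsmul_eq_mul]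
      _ = M * (wordLength S (g⁻¹ * h) : ℝ) := by rw [hlen]; ring
  have part3 : ∀ g h : G, (wordLength S (g⁻¹ * h) : ℝ) ≤ (2 / ε) * dhat g h + 2 / ε + 1 := by
    intro g h
    have hkey : ε * (wordLength S (g⁻¹ * h) : ℝ) - ε ≤ dhat g h := by
      apply ge_forall
      intro n x h0 hn hxS
      have := chain_bound d hd_nonneg hd_self hd_tri hd_li S hsymm h1S hgen ε hε hball n x hxS
      rw [h0, hn] at this
      linarith
    have hD := hnonneg g h
    rw [← mul_le_mul_iff_right₀ hε]
    have hε' : ε ≠ 0 := ne_of_gt hε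
    have e : ε * ((2 / ε) * dhat g h + 2 / ε + 1) = 2 * dhat g h + 2 + ε := by
      field_simp
    rw [e]
    linarith
  exact ⟨⟨hcont, hself, fun g h => le_antisymm (hsymm' g h) (hsymm' h g),
    hnonneg, htri, hli⟩, part2, part3⟩
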